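/- Let G be a compact Hausdorff topological group and μ an idempotent Radon probability measure on G (μ ∗ μ = μ). Then for every g ∈ supp(μ), μ ∗ δ_g = μ and δ_g ∗ μ = μ; that is, μ is invariant under left and right translation by all elements of its support. -/

import Mathlib

open MeasureTheory Filter Set Function
open scoped Topology ENNReal

/-- The support of a measure: points all of whose open neighborhoods have positive
measure. -/
def msupport {X : Type*} [TopologicalSpace X] [MeasurableSpace X] (μ : Measure X) : Set X :=
  {x | ∀ U : Set X, IsOpen U → x ∈ U → 0 < μ U}

/-- Convolution of measures: the pushforward of the product measure under the
multiplication map. -/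
noncomputable def mconv {M : Type*} [Mul M] [MeasurableSpace M]
    (μ ν : Measure M) : Measure M :=
  (μ.prod ν).map fun p : M × M => p.1 * p.2

section Aux

/-- A continuous function on a compact space is integrable. -/
lemma cont_integrable {X : Type*} [TopologicalSpace X] [MeasurableSpace X]
    [OpensMeasurableSpace X] [CompactSpace X] [T2Space X]
    (μ : Measure X) [IsFiniteMeasure μ] {f : X → ℝ} (hf : Continuous f) :
    Integrable f μ :=
  hf.integrable_of_hasCompactSupport (IsClosed.isCompact (isClosed_tsupport f))

/-- A continuous real function on a compact space is bounded. -/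
lemma exists_bound {X : Type*} [TopologicalSpace X] [CompactSpace X] [Nonempty X]
    {f : X → ℝ} (hf : Continuous f) : ∃ C : ℝ, ∀ x, ‖f x‖ ≤ C := by
  obtain ⟨x, -, hx⟩ := isCompact_univ.exists_isMaxOn univ_nonempty hf.norm.continuousOn
  exact ⟨‖f x‖, fun y => hx (mem_univ y)⟩

variable {G : Type*} [TopologicalSpace G] [MeasurableSpace G]

lemma msupport_isClosed (μ : Measure G) : IsClosed (msupport μ) := by
  rw [← isOpen_compl_iff, isOpen_iff_mem_nhds]
  intro x hx
  simp only [msupport, mem_compl_iff, mem_setOf_eq, not_forall] at hx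
  obtain ⟨U, hUo, hxU, hU⟩ := hx
  have hU0 : μ U = 0 := by simpa using hU
  filter_upwards [hUo.mem_nhds hxU] with y hy
  intro hyS
  exact absurd (hyS U hUo hy) (by simp [hU0])

lemma measure_msupport_compl [OpensMeasurableSpace G] (μ : Measure G) [μ.Regular] :
    μ (msupport μ)ᶜ = 0 := by
  by_contra h
  have hpos : 0 < μ (msupport μ)ᶜ := pos_iff_ne_zero.2 h
  have hopen : IsOpen (msupport μ)ᶜ := (msupport_isClosed μ).isOpen_compl
  obtain ⟨K, hKU, hKc, hK⟩ := Measure.Regular.innerRegular hopen 0 hpos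
  have hch : ∀ x : G, x ∈ K → ∃ V : Set G, IsOpen V ∧ x ∈ V ∧ μ V = 0 := by
    intro x hx
    have hx' := hKU hx
    simp only [msupport, mem_compl_iff, mem_setOf_eq, not_forall] at hx'
    obtain ⟨V, hVo, hxV, hV⟩ := hx'
    exact ⟨V, hVo, hxV, by simpa using hV⟩
  choose! V hVo hxV hV0 using hch
  obtain ⟨t, htK, htcov⟩ := hKc.elim_nhds_subcover V
    (fun x hx => (hVo x hx).mem_nhds (hxV x hx))
  have hle : μ K ≤ 0 := by
    calc μ K ≤ μ (⋃ x ∈ t, V x) := measure_mono htcov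
    _ ≤ ∑ x ∈ t, μ (V x) := measure_biUnion_finset_le t V
    _ = 0 := Finset.sum_eq_zero fun x hx => hV0 x (htK x hx)
  exact absurd hK (by simpa using hle)

lemma msupport_nonempty [OpensMeasurableSpace G] (μ : Measure G) [IsProbabilityMeasure μ]
    [μ.Regular] : (msupport μ).Nonempty := by
  rw [nonempty_iff_ne_empty]
  intro h
  have h0 := measure_msupport_compl μ
  rw [h, compl_empty, measure_univ] at h0
  simp at h0

lemma mul_mem_msupport [Mul G] [ContinuousMul G] [OpensMeasurableSpace G] {μ : Measure G}
    [IsProbabilityMeasure μ] (h : mconv μ μ = μ) {a b : G} (ha : a ∈ msupport μ)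
    (hb : b ∈ msupport μ) : a * b ∈ msupport μ := by
  by_cases hmeas : AEMeasurable (fun p : G × G => p.1 * p.2) (μ.prod μ)
  · intro U hUo hab
    have hU : μ U = (μ.prod μ) ((fun p : G × G => p.1 * p.2) ⁻¹' U) := by
      conv_lhs => rw [← h]
      exact Measure.map_apply_of_aemeasurable hmeas hUo.measurableSet
    have hnh : (fun p : G × G => p.1 * p.2) ⁻¹' U ∈ 𝓝 (a, b) :=
      continuous_mul.continuousAt.preimage_mem_nhds (hUo.mem_nhds hab)
    rw [mem_nhds_prod_iff] at hnh
    obtain ⟨Vn, hV, Wn, hW, hVW⟩ := hnh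
    obtain ⟨V', hV'V, hV'o, haV'⟩ := mem_nhds_iff.1 hV
    obtain ⟨W', hW'W, hW'o, hbW'⟩ := mem_nhds_iff.1 hW
    have hsub : μ V' * μ W' ≤ (μ.prod μ) ((fun p : G × G => p.1 * p.2) ⁻¹' U) := by
      rw [← Measure.prod_prod]
      exact measure_mono fun p hp => hVW ⟨hV'V hp.1, hW'W hp.2⟩
    rw [hU]
    exact lt_of_lt_of_le (ENNReal.mul_pos (ha V' hV'o haV').ne' (hb W' hW'o hbW').ne') hsub
  · exfalso
    have h0 : mconv μ μ = 0 := Measure.map_of_not_aemeasurable hmeas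
    have hμ0 : μ = 0 := by rw [← h, h0]
    have h1 : μ univ = 1 := measure_univ
    rw [hμ0] at h1
    simp at h1

lemma IsClosed.mem_of_mapClusterPt' {X : Type*} [TopologicalSpace X] {S : Set X}
    (hS : IsClosed S) {x : X} {u : ℕ → X} (h : MapClusterPt x atTop u)
    (hu : ∀ᶠ n in atTop, u n ∈ S) : x ∈ S := by
  rw [← hS.closure_eq, mem_closure_iff_clusterPt]
  exact h.clusterPt.mono (le_principal_iff.2 (show S ∈ Filter.map u atTop from hu))

end Aux

section Core

variable {G : Type*} [TopologicalSpace G] [MeasurableSpace G] [OpensMeasurableSpace G]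
  [CompactSpace G] [T2Space G]

/-- Core maximum-principle argument. -/
lemma core_le (μ : Measure G) [IsProbabilityMeasure μ]
    {S : Set G} (hScl : IsClosed S) (hSne : S.Nonempty)
    (haeS : ∀ᵐ z ∂μ, z ∈ S)
    (hpos : ∀ x ∈ S, ∀ U : Set G, IsOpen U → x ∈ U → 0 < μ U)
    (op : G → G → G) (hopc : ∀ y, Continuous fun z => op z y)
    (hopS : ∀ a ∈ S, ∀ b ∈ S, op a b ∈ S)
    (e : G) (hinv : ∀ y ∈ S, ∃ z ∈ S, op z y = e)
    (φ : G → ℝ) (hφ : Continuous φ)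
    (hrec : ∀ y : G, φ y = ∫ z, φ (op z y) ∂μ) :
    ∀ g ∈ S, φ g ≤ φ e := by
  obtain ⟨y₀, hy₀S, hmax⟩ := hScl.isCompact.exists_isMaxOn hSne hφ.continuousOn
  have hintc : Integrable (fun z => φ (op z y₀)) μ := cont_integrable μ (hφ.comp (hopc y₀))
  have hle : ∀ᵐ z ∂μ, φ (op z y₀) ≤ φ y₀ := haeS.mono fun z hz => hmax (hopS z hz y₀ hy₀S)
  have hzero : ∫ z, (φ y₀ - φ (op z y₀)) ∂μ = 0 := by
    rw [integral_sub (integrable_const _) hintc, integral_const, ← hrec y₀]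
    simp
  have hae0 : (fun z => φ y₀ - φ (op z y₀)) =ᵐ[μ] 0 :=
    (integral_eq_zero_iff_of_nonneg_ae (hle.mono fun z hz => sub_nonneg.2 hz)
      ((integrable_const _).sub hintc)).1 hzero
  have haeW : ∀ᵐ z ∂μ, z ∈ {w | φ (op w y₀) = φ y₀} := by
    filter_upwards [hae0] with z hz
    have hz' : φ y₀ - φ (op z y₀) = 0 := hz
    simpa [mem_setOf_eq, sub_eq_zero, eq_comm] using hz'
  have hWcl : IsClosed {w | φ (op w y₀) = φ y₀} :=
    isClosed_eq (hφ.comp (hopc y₀)) continuous_const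
  have hSW : S ⊆ {w | φ (op w y₀) = φ y₀} := by
    intro z hz
    by_contra hzW
    have h0 : μ {w | φ (op w y₀) = φ y₀}ᶜ = 0 := by
      have := ae_iff.1 haeW
      simpa [compl_setOf] using this
    exact absurd h0 (hpos z hz _ hWcl.isOpen_compl hzW).ne'
  obtain ⟨z₁, hz₁S, hz₁⟩ := hinv y₀ hy₀S
  have he : φ e = φ y₀ := by rw [← hz₁]; exact hSW hz₁S
  intro g hg
  rw [he]
  exact hmax hg

/-- Continuity of a parametric integral over a compact space. -/
lemma continuous_param (μ : Measure G) [IsProbabilityMeasure μ]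
    {F : G × G → ℝ} (hF : Continuous F) :
    Continuous fun y => ∫ x, F (x, y) ∂μ := by
  rw [continuous_iff_continuousAt]
  intro y₀
  rw [ContinuousAt, Metric.tendsto_nhds]
  intro ε hε
  have key : ∀ x : G, ∃ U V : Set G, IsOpen U ∧ IsOpen V ∧ x ∈ U ∧ y₀ ∈ V ∧
      ∀ x' ∈ U, ∀ y ∈ V, |F (x', y) - F (x, y₀)| < ε / 4 := by
    intro x
    have hopen : IsOpen {p : G × G | |F p - F (x, y₀)| < ε / 4} := by
      have : Continuous fun p : G × G => |F p - F (x, y₀)| := (hF.sub continuous_const).abs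
      exact isOpen_lt this continuous_const
    have hmem : {p : G × G | |F p - F (x, y₀)| < ε / 4} ∈ 𝓝 (x, y₀) :=
      hopen.mem_nhds (by simp; linarith)
    rw [mem_nhds_prod_iff] at hmem
    obtain ⟨Un, hU, Vn, hV, hUV⟩ := hmem
    obtain ⟨U', hU'U, hU'o, hxU'⟩ := mem_nhds_iff.1 hU
    obtain ⟨V', hV'V, hV'o, hyV'⟩ := mem_nhds_iff.1 hV
    exact ⟨U', V', hU'o, hV'o, hxU', hyV',
      fun x' hx' y hy => hUV ⟨hU'U hx', hV'V hy⟩⟩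
  choose U V hUo hVo hxU hyV hbound using key
  obtain ⟨t, -, htcov⟩ := isCompact_univ.elim_nhds_subcover U
    (fun x _ => (hUo x).mem_nhds (hxU x))
  have hWo : IsOpen (⋂ x ∈ t, V x) := isOpen_biInter_finset fun x _ => hVo x
  have hyW : y₀ ∈ ⋂ x ∈ t, V x := mem_iInter₂.2 fun x _ => hyV x
  have hbd : ∀ y ∈ ⋂ x ∈ t, V x, ∀ x : G, |F (x, y) - F (x, y₀)| ≤ ε / 2 := by
    intro y hy x
    obtain ⟨c, hct, hxc⟩ : ∃ c ∈ t, x ∈ U c := by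
      have := htcov (mem_univ x)
      simpa using this
    have h1 := hbound c x hxc y (mem_iInter₂.1 hy c hct)
    have h2 := hbound c x hxc y₀ (hyV c)
    have h3 : |F (x, y) - F (x, y₀)| ≤ |F (x, y) - F (c, y₀)| + |F (c, y₀) - F (x, y₀)| :=
      abs_sub_le _ _ _
    rw [abs_sub_comm (F (c, y₀))] at h3
    linarith
  filter_upwards [hWo.mem_nhds hyW] with y hy
  have hint1 : Integrable (fun x => F (x, y)) μ :=
    cont_integrable μ (hF.comp (continuous_id.prodMk continuous_const))
  have hint0 : Integrable (fun x => F (x, y₀)) μ :=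
    cont_integrable μ (hF.comp (continuous_id.prodMk continuous_const))
  have hsub : ∫ x, F (x, y) ∂μ - ∫ x, F (x, y₀) ∂μ = ∫ x, (F (x, y) - F (x, y₀)) ∂μ :=
    (integral_sub hint1 hint0).symm
  rw [Real.dist_eq, hsub]
  have hnorm : ‖∫ x, (F (x, y) - F (x, y₀)) ∂μ‖ ≤ (ε / 2) * (μ univ).toReal :=
    norm_integral_le_of_norm_le_const
      (ae_of_all μ fun x => by simpa [Real.norm_eq_abs] using hbd y hy x)
  rw [Real.norm_eq_abs] at hnorm
  have : (μ univ).toReal = 1 := by simp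
  rw [this, mul_one] at hnorm
  linarith

end Core

section Ext

variable {G : Type*} [TopologicalSpace G] [CompactSpace G] [T2Space G]
  [MeasurableSpace G] [BorelSpace G]

lemma measure_le_of_integral_le (μ ν : Measure G) [IsFiniteMeasure μ] [IsFiniteMeasure ν]
    [ν.OuterRegular]
    (h : ∀ f : G → ℝ, Continuous f → ∫ x, f x ∂μ = ∫ x, f x ∂ν)
    {F : Set G} (hF : IsClosed F) : μ F ≤ ν F := by
  rw [Set.measure_eq_iInf_isOpen F ν]
  refine le_iInf fun Uo => le_iInf fun hFU => le_iInf fun hUo => ?_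
  obtain ⟨f, hf0, hf1, hf01⟩ := exists_continuous_zero_one_of_isCompact
    hUo.isClosed_compl.isCompact hF (disjoint_left.2 fun x hxc hxF => hxc (hFU hxF))
  have hfμ : Integrable f μ := cont_integrable μ f.continuous
  have hfν : Integrable f ν := cont_integrable ν f.continuous
  have h1 : (μ F).toReal ≤ ∫ x, f x ∂μ := by
    have e1 : ∫ x in F, (1 : ℝ) ∂μ = (μ F).toReal := by simp [measureReal_def]
    have e2 : ∫ x in F, f x ∂μ = ∫ x in F, (1 : ℝ) ∂μ :=
      setIntegral_congr_fun hF.measurableSet fun x hx => hf1 hx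
    calc (μ F).toReal = ∫ x in F, f x ∂μ := by rw [e2, e1]
    _ ≤ ∫ x, f x ∂μ := setIntegral_le_integral hfμ (ae_of_all _ fun x => (hf01 x).1)
  have h2 : ∫ x, f x ∂ν ≤ (ν Uo).toReal := by
    have hind : ∫ x, Uo.indicator (fun _ => (1 : ℝ)) x ∂ν = (ν Uo).toReal := by
      rw [integral_indicator_const _ hUo.measurableSet]
      simp [measureReal_def]
    have hlemono : ∫ x, f x ∂ν ≤ ∫ x, Uo.indicator (fun _ => (1 : ℝ)) x ∂ν := by
      refine integral_mono hfν ((integrable_const (1 : ℝ)).indicator hUo.measurableSet)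
        fun x => ?_
      by_cases hx : x ∈ Uo
      · simp [indicator_of_mem hx, (hf01 x).2]
      · have : f x = 0 := hf0 hx
        simp [indicator_of_notMem hx, this]
    rw [← hind]
    exact hlemono
  have hfin := h1.trans ((h f f.continuous).le.trans h2)
  exact (ENNReal.toReal_le_toReal (measure_ne_top μ F) (measure_ne_top ν Uo)).1 hfin

lemma ext_of_integral_eq (μ ν : Measure G) [IsFiniteMeasure μ] [IsFiniteMeasure ν]
    [μ.OuterRegular] [ν.OuterRegular]
    (h : ∀ f : G → ℝ, Continuous f → ∫ x, f x ∂μ = ∫ x, f x ∂ν) : μ = ν := by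
  have key : ∀ {F : Set G}, IsClosed F → μ F = ν F := fun hF =>
    le_antisymm (measure_le_of_integral_le μ ν h hF)
      (measure_le_of_integral_le ν μ (fun f hf => (h f hf).symm) hF)
  refine MeasureTheory.ext_of_generate_finite _ ?_ isPiSystem_isClosed (fun F hF => key hF)
    (key isClosed_univ)
  rw [BorelSpace.measurable_eq (α := G), borel_eq_generateFrom_isClosed]

end Ext

/-- Let `G` be a compact Hausdorff topological group and `μ` an idempotent Radon
probability measure (`μ ∗ μ = μ`). Then for every `g` in the support of `μ` one has
`μ ∗ δ_g = μ` and `δ_g ∗ μ = μ`: `μ` is invariant under left and right translation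
by all elements of its support. -/
theorem idempotent_invariant_under_support_translations
    {G : Type*} [Group G] [TopologicalSpace G] [IsTopologicalGroup G]
    [CompactSpace G] [T2Space G] [MeasurableSpace G] [BorelSpace G]
    (μ : Measure G) [IsProbabilityMeasure μ] [μ.Regular]
    (hidem : mconv μ μ = μ) :
    ∀ g ∈ msupport μ,
      mconv μ (Measure.dirac g) = μ ∧ mconv (Measure.dirac g) μ = μ := by
  intro g hg
  by_cases hmeas : AEMeasurable (fun p : G × G => p.1 * p.2) (μ.prod μ)
  swap
  · exfalso
    have h0 : mconv μ μ = 0 := Measure.map_of_not_aemeasurable hmeas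
    have hμ0 : μ = 0 := by rw [← hidem, h0]
    have h1 : μ univ = 1 := measure_univ
    rw [hμ0] at h1; simp at h1
  -- support facts
  have hScl : IsClosed (msupport μ) := msupport_isClosed μ
  have hS0 : μ (msupport μ)ᶜ = 0 := measure_msupport_compl μ
  have hSne : (msupport μ).Nonempty := msupport_nonempty μ
  have haeS : ∀ᵐ z ∂μ, z ∈ msupport μ := by
    rw [ae_iff]
    exact hS0
  have hpos : ∀ x ∈ msupport μ, ∀ U : Set G, IsOpen U → x ∈ U → 0 < μ U := fun x hx => hx
  have hmul : ∀ a ∈ msupport μ, ∀ b ∈ msupport μ, a * b ∈ msupport μ :=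
    fun a ha b hb => mul_mem_msupport hidem ha hb
  have hpow : ∀ a ∈ msupport μ, ∀ n : ℕ, 1 ≤ n → a ^ n ∈ msupport μ := by
    intro a ha n hn
    induction n with
    | zero => omega
    | succ k ih =>
      rcases Nat.eq_zero_or_pos k with hk | hk
      · subst hk; simpa using ha
      · rw [pow_succ]
        exact hmul _ (ih hk) _ ha
  have hinvS : ∀ a ∈ msupport μ, a⁻¹ ∈ msupport μ := by
    intro a ha
    have hcl := mapClusterPt_self_zpow_atTop_pow a (-1)
    rw [zpow_neg_one] at hcl
    exact hScl.mem_of_mapClusterPt' hcl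
      (eventually_atTop.2 ⟨1, fun n hn => hpow a ha n hn⟩)
  -- integrability helpers
  have hprod_int : ∀ h : G × G → ℝ, Continuous h →
      AEStronglyMeasurable (fun p : G × G => h p) (μ.prod μ) → Integrable h (μ.prod μ) := by
    intro h hc hm
    obtain ⟨C, hC⟩ := exists_bound hc
    exact Integrable.mono' (integrable_const C) hm (ae_of_all _ hC)
  -- idempotence transported to integrals
  have hidem_int : ∀ h : G → ℝ, Continuous h →
      ∫ w, h w ∂μ = ∫ p : G × G, h (p.1 * p.2) ∂(μ.prod μ) := by
    intro h hc
    conv_lhs => rw [← hidem]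
    exact integral_map hmeas hc.aestronglyMeasurable
  -- the key translation invariance of integrals
  have keyR : ∀ f : G → ℝ, Continuous f → ∫ x, f (x * g) ∂μ = ∫ x, f x ∂μ := by
    intro f hf
    set φ : G → ℝ := fun y => ∫ x, f (x * y) ∂μ with hφdef
    have hφc : Continuous φ := continuous_param μ (hf.comp continuous_mul)
    have hrec : ∀ y : G, φ y = ∫ z, φ (z * y) ∂μ := by
      intro y
      have hFc : Continuous fun p : G × G => f (p.1 * p.2 * y) := by fun_prop
      have hFm : AEStronglyMeasurable (fun p : G × G => f (p.1 * p.2 * y)) (μ.prod μ) := by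
        have : (fun p : G × G => f (p.1 * p.2 * y)) =
            (fun w : G => f (w * y)) ∘ (fun p : G × G => p.1 * p.2) := rfl
        rw [this]
        exact (Continuous.aestronglyMeasurable (by fun_prop)).comp_aemeasurable hmeas
      have hFint := hprod_int _ hFc hFm
      calc φ y = ∫ p : G × G, f (p.1 * p.2 * y) ∂(μ.prod μ) :=
            hidem_int (fun w => f (w * y)) (by fun_prop)
      _ = ∫ z, ∫ x, f (x * z * y) ∂μ ∂μ := integral_prod_symm _ hFint
      _ = ∫ z, φ (z * y) ∂μ := by simp only [hφdef, mul_assoc]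
    have hinvR : ∀ y ∈ msupport μ, ∃ z ∈ msupport μ, z * y = 1 :=
      fun y hy => ⟨y⁻¹, hinvS y hy, inv_mul_cancel y⟩
    have hup := core_le μ hScl hSne haeS hpos (fun z y => z * y)
      (fun y => by fun_prop) hmul 1 hinvR φ hφc hrec
    have hdn := core_le μ hScl hSne haeS hpos (fun z y => z * y)
      (fun y => by fun_prop) hmul 1 hinvR (-φ) hφc.neg
      (fun y => by simp only [Pi.neg_apply]; rw [integral_neg, ← hrec y])
    have h1 : φ g = φ 1 := le_antisymm (hup g hg) (by
      have := hdn g hg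
      simpa using this)
    have h2 : φ 1 = ∫ x, f x ∂μ := by simp [hφdef]
    rw [← h2]
    exact h1
  have keyL : ∀ f : G → ℝ, Continuous f → ∫ x, f (g * x) ∂μ = ∫ x, f x ∂μ := by
    intro f hf
    set φ : G → ℝ := fun y => ∫ x, f (y * x) ∂μ with hφdef
    have hφc : Continuous φ :=
      continuous_param μ (F := fun p : G × G => f (p.2 * p.1)) (by fun_prop)
    have hrec : ∀ y : G, φ y = ∫ z, φ (y * z) ∂μ := by
      intro y
      have hFc : Continuous fun p : G × G => f (y * (p.1 * p.2)) := by fun_prop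
      have hFm : AEStronglyMeasurable (fun p : G × G => f (y * (p.1 * p.2))) (μ.prod μ) := by
        have : (fun p : G × G => f (y * (p.1 * p.2))) =
            (fun w : G => f (y * w)) ∘ (fun p : G × G => p.1 * p.2) := rfl
        rw [this]
        exact (Continuous.aestronglyMeasurable (by fun_prop)).comp_aemeasurable hmeas
      have hFint := hprod_int _ hFc hFm
      calc φ y = ∫ p : G × G, f (y * (p.1 * p.2)) ∂(μ.prod μ) :=
            hidem_int (fun w => f (y * w)) (by fun_prop)
      _ = ∫ z, ∫ x, f (y * (z * x)) ∂μ ∂μ := integral_prod _ hFint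
      _ = ∫ z, φ (y * z) ∂μ := by simp only [hφdef, mul_assoc]
    have hopS : ∀ a ∈ msupport μ, ∀ b ∈ msupport μ, b * a ∈ msupport μ :=
      fun a ha b hb => hmul b hb a ha
    have hinvL : ∀ y ∈ msupport μ, ∃ z ∈ msupport μ, y * z = 1 :=
      fun y hy => ⟨y⁻¹, hinvS y hy, mul_inv_cancel y⟩
    have hup := core_le μ hScl hSne haeS hpos (fun z y => y * z)
      (fun y => by fun_prop) hopS 1 hinvL φ hφc hrec
    have hdn := core_le μ hScl hSne haeS hpos (fun z y => y * z)
      (fun y => by fun_prop) hopS 1 hinvL (-φ) hφc.neg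
      (fun y => by simp only [Pi.neg_apply]; rw [integral_neg, ← hrec y])
    have h1 : φ g = φ 1 := le_antisymm (hup g hg) (by
      have := hdn g hg
      simpa using this)
    have h2 : φ 1 = ∫ x, f x ∂μ := by simp [hφdef]
    rw [← h2]
    exact h1
  constructor
  · -- right translation
    have hmap : mconv μ (Measure.dirac g) = μ.map (fun x => x * g) := by
      unfold mconv
      rw [Measure.prod_dirac]
      rw [AEMeasurable.map_map_of_aemeasurable
        ((measurableEmbedding_prod_mk_right g).aemeasurable_map_iff.2
          (measurable_mul_const g).aemeasurable)
        measurable_prodMk_right.aemeasurable]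
      rfl
    rw [hmap]
    have : (μ.map (fun x => x * g)).Regular := Measure.Regular.map (Homeomorph.mulRight g)
    have : IsProbabilityMeasure (μ.map (fun x => x * g)) :=
      Measure.isProbabilityMeasure_map (measurable_mul_const g).aemeasurable
    refine ext_of_integral_eq _ _ fun f hf => ?_
    rw [integral_map (measurable_mul_const g).aemeasurable hf.aestronglyMeasurable]
    exact keyR f hf
  · -- left translation
    have hmap : mconv (Measure.dirac g) μ = μ.map (fun x => g * x) := by
      unfold mconv
      rw [Measure.dirac_prod]
      rw [AEMeasurable.map_map_of_aemeasurable
        ((measurableEmbedding_prodMk_left g).aemeasurable_map_iff.2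
          (measurable_const_mul g).aemeasurable)
        measurable_prodMk_left.aemeasurable]
      rfl
    rw [hmap]
    have : (μ.map (fun x => g * x)).Regular := Measure.Regular.map (Homeomorph.mulLeft g)
    have : IsProbabilityMeasure (μ.map (fun x => g * x)) :=
      Measure.isProbabilityMeasure_map (measurable_const_mul g).aemeasurable
    refine ext_of_integral_eq _ _ fun f hf => ?_
    rw [integral_map (measurable_const_mul g).aemeasurable hf.aestronglyMeasurable]
    exact keyL f hf
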